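/- Let M and i be integers with M ≥ 3 and 6 ≤ i ≤ M+3. Define the following convex cones in ℝ³ (cone{…} denotes nonnegative real linear combinations): C₀ = cone{(0,0,1)}; C₁ = cone{(0,1,0),(0,0,1)}; C₂ = C₃ = cone{(1,1,0),(0,1,0),(0,0,1)}; C₄ = cone{(2,3,0),(1,3,0),(0,1,1),(0,0,1)}; C₅ = cone{(1,2,0),(0,1,2)}; C₆ = cone{(1,2,0)}. For an integer 0 ≤ s ≤ 6 let T_s : ℝ³ → ℝ³ be the linear map T_s(a,b,c) = (C(i−2, i−s)·a, C(i−1, i−s)·b, C(i, i−s)·c), where C(x,y) is the binomial coefficient (equal to 0 when y > x). Then the convex cone generated by the union of the sets T_s(C_s) over all integers s with max(0, i−M) ≤ s ≤ 6 equals cone{(5, 2i−2, 0), (0,1,0), (0,0,1)}. -/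

import Mathlib

open Finset

/-- `nonnegSpan S` is the set of (finite) nonnegative real linear combinations of
elements of `S`, i.e. the convex cone generated by `S` (together with `0`). -/
def nonnegSpan {V : Type*} [AddCommMonoid V] [Module ℝ V] (S : Set V) : Set V :=
  { x | ∃ (k : ℕ) (c : Fin k → ℝ) (v : Fin k → V),
      (∀ t, 0 ≤ c t) ∧ (∀ t, v t ∈ S) ∧ x = ∑ t, c t • v t }

/-- The cones `C₀, …, C₆` in `ℝ³`: the pseudoeffective cones of `s`-cycles on the
universal plane conic, in the coordinates `(d₂, d₁, d₀)`. -/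
def C12 : ℕ → Set (ℝ × ℝ × ℝ)
  | 0 => nonnegSpan {(0, 0, 1)}
  | 1 => nonnegSpan {(0, 1, 0), (0, 0, 1)}
  | 2 => nonnegSpan {(1, 1, 0), (0, 1, 0), (0, 0, 1)}
  | 3 => nonnegSpan {(1, 1, 0), (0, 1, 0), (0, 0, 1)}
  | 4 => nonnegSpan {(2, 3, 0), (1, 3, 0), (0, 1, 1), (0, 0, 1)}
  | 5 => nonnegSpan {(1, 2, 0), (0, 1, 2)}
  | 6 => nonnegSpan {(1, 2, 0)}
  | _ => ∅

/-- The diagonal map `T_s(a,b,c) = (C(i−2,i−s)·a, C(i−1,i−s)·b, C(i,i−s)·c)`. -/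
def T12 (i s : ℕ) : ℝ × ℝ × ℝ → ℝ × ℝ × ℝ := fun p =>
  (((i - 2).choose (i - s) : ℝ) * p.1,
    ((i - 1).choose (i - s) : ℝ) * p.2.1,
    (i.choose (i - s) : ℝ) * p.2.2)

section helpers
variable {V W : Type*} [AddCommMonoid V] [Module ℝ V] [AddCommMonoid W] [Module ℝ W]

lemma mem_nonnegSpan_of_mem {S : Set V} {x : V} (h : x ∈ S) : x ∈ nonnegSpan S :=
  ⟨1, fun _ => 1, fun _ => x, fun _ => zero_le_one, fun _ => h, by simp⟩

lemma nonnegSpan_zero_mem (S : Set V) : (0 : V) ∈ nonnegSpan S :=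
  ⟨0, Fin.elim0, Fin.elim0, fun t => t.elim0, fun t => t.elim0, by simp⟩

lemma nonnegSpan_smul_mem {S : Set V} {x : V} (hx : x ∈ nonnegSpan S) {a : ℝ} (ha : 0 ≤ a) :
    a • x ∈ nonnegSpan S := by
  obtain ⟨k, c, v, h1, h2, h3⟩ := hx
  exact ⟨k, fun t => a * c t, v, fun t => mul_nonneg ha (h1 t), h2,
    by simp [h3, Finset.smul_sum, mul_smul]⟩

lemma nonnegSpan_add_mem {S : Set V} {x y : V} (hx : x ∈ nonnegSpan S)
    (hy : y ∈ nonnegSpan S) : x + y ∈ nonnegSpan S := by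
  obtain ⟨k, c, v, h1, h2, h3⟩ := hx
  obtain ⟨l, d, w, g1, g2, g3⟩ := hy
  refine ⟨k + l, Fin.append c d, Fin.append v w, ?_, ?_, ?_⟩
  · intro t
    refine Fin.addCases (fun t0 => ?_) (fun t0 => ?_) t <;>
      simp [Fin.append_left, Fin.append_right, h1, g1]
  · intro t
    refine Fin.addCases (fun t0 => ?_) (fun t0 => ?_) t <;>
      simp [Fin.append_left, Fin.append_right, h2, g2]
  · rw [Fin.sum_univ_add]
    simp [Fin.append_left, Fin.append_right, h3, g3]

lemma nonnegSpan_subset' {S T : Set V} (h : S ⊆ nonnegSpan T) :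
    nonnegSpan S ⊆ nonnegSpan T := by
  rintro x ⟨k, c, v, h1, h2, h3⟩
  subst h3
  exact Finset.sum_induction _ (· ∈ nonnegSpan T) (fun a b ha hb => nonnegSpan_add_mem ha hb)
    (nonnegSpan_zero_mem T) (fun t _ => nonnegSpan_smul_mem (h (h2 t)) (h1 t))

lemma map_mem_nonnegSpan (f : V →ₗ[ℝ] W) {S : Set V} {x : V} (hx : x ∈ nonnegSpan S) :
    f x ∈ nonnegSpan (f '' S) := by
  obtain ⟨k, c, v, h1, h2, h3⟩ := hx
  exact ⟨k, c, fun t => f (v t), h1, fun t => ⟨v t, h2 t, rfl⟩, by simp [h3]⟩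

end helpers

/-- `T12 i s` as a linear map. -/
def Tlin (i s : ℕ) : (ℝ × ℝ × ℝ) →ₗ[ℝ] (ℝ × ℝ × ℝ) where
  toFun := T12 i s
  map_add' p q := by
    simp only [T12, Prod.ext_iff, Prod.fst_add, Prod.snd_add]
    refine ⟨by ring, by ring, by ring⟩
  map_smul' a p := by
    simp only [T12, Prod.ext_iff, Prod.smul_fst, Prod.smul_snd, smul_eq_mul, RingHom.id_apply]
    refine ⟨by ring, by ring, by ring⟩

lemma mem_target (i : ℕ) {a b c : ℝ} (ha : 0 ≤ a) (hc : 0 ≤ c)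
    (hb : (2 * (i : ℝ) - 2) * a ≤ 5 * b) :
    ((a, b, c) : ℝ × ℝ × ℝ) ∈
      nonnegSpan {((5 : ℝ), (2 * (i : ℝ) - 2), (0 : ℝ)), (0, 1, 0), (0, 0, 1)} := by
  refine ⟨3, ![a/5, b - (2 * (i : ℝ) - 2) * a / 5, c],
    ![(5, 2 * (i : ℝ) - 2, 0), (0, 1, 0), (0, 0, 1)], ?_, ?_, ?_⟩
  · intro t; fin_cases t <;> simp <;> linarith
  · intro t; fin_cases t <;> simp
  · simp only [Fin.sum_univ_three, Prod.ext_iff, smul_eq_mul, Matrix.cons_val_zero,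
      Matrix.cons_val_one, Matrix.head_cons, Prod.smul_mk, Prod.mk_add_mk, Prod.fst_add,
      Prod.snd_add, Matrix.cons_val_two, Matrix.tail_cons]
    norm_num
    ring

lemma key_id (j k : ℕ) : (j + 5) * (j + 4).choose k = (j + 5).choose (k + 1) * (k + 1) := by
  have h := Nat.add_one_mul_choose_eq (j + 4) k
  exact h

set_option maxHeartbeats 1600000

/-- For integers `M ≥ 3` and `6 ≤ i ≤ M+3`, the convex cone generated by the union of
the sets `T_s(C_s)` over all integers `s` with `max(0, i−M) ≤ s ≤ 6` equals
`cone{(5, 2i−2, 0), (0,1,0), (0,0,1)}`. -/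
theorem stmt_12 (M i : ℕ) (hM : 3 ≤ M) (hi : 6 ≤ i) (hiM : i ≤ M + 3) :
    nonnegSpan (⋃ s ∈ Set.Icc (max 0 (i - M)) 6, T12 i s '' C12 s)
      = nonnegSpan {((5 : ℝ), (2 * (i : ℝ) - 2), (0 : ℝ)), (0, 1, 0), (0, 0, 1)} := by
  obtain ⟨j, rfl⟩ : ∃ j, i = j + 6 := ⟨i - 6, by omega⟩
  -- symmetry facts for binomial coefficients
  have hA1 : (j+4).choose (j+3) = (j+4).choose 1 := Nat.choose_symm_of_eq_add (by omega)
  have hA2 : (j+4).choose (j+2) = (j+4).choose 2 := Nat.choose_symm_of_eq_add (by omega)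
  have hA3 : (j+4).choose (j+1) = (j+4).choose 3 := Nat.choose_symm_of_eq_add (by omega)
  have hA4 : (j+4).choose j = (j+4).choose 4 := Nat.choose_symm_of_eq_add (by omega)
  have hB1 : (j+5).choose (j+4) = (j+5).choose 1 := Nat.choose_symm_of_eq_add (by omega)
  have hB2 : (j+5).choose (j+3) = (j+5).choose 2 := Nat.choose_symm_of_eq_add (by omega)
  have hB3 : (j+5).choose (j+2) = (j+5).choose 3 := Nat.choose_symm_of_eq_add (by omega)
  have hB4 : (j+5).choose (j+1) = (j+5).choose 4 := Nat.choose_symm_of_eq_add (by omega)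
  have hB5 : (j+5).choose j = (j+5).choose 5 := Nat.choose_symm_of_eq_add (by omega)
  have kk1 : ((j:ℝ)+5) * ((j:ℝ)+4) = ((j+5).choose 2 : ℝ) * 2 := by
    have h := key_id j 1; norm_num at h; exact_mod_cast h
  have kk2 : ((j:ℝ)+5) * ((j+4).choose 2 : ℝ) = ((j+5).choose 3 : ℝ) * 3 := by
    have h := key_id j 2; norm_num at h; exact_mod_cast h
  have kk3 : ((j:ℝ)+5) * ((j+4).choose 3 : ℝ) = ((j+5).choose 4 : ℝ) * 4 := by
    have h := key_id j 3; norm_num at h; exact_mod_cast h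
  have kk4 : ((j:ℝ)+5) * ((j+4).choose 4 : ℝ) = ((j+5).choose 5 : ℝ) * 5 := by
    have h := key_id j 4; norm_num at h; exact_mod_cast h
  have hj : (0:ℝ) ≤ (j:ℝ) := Nat.cast_nonneg j
  apply Set.Subset.antisymm
  · -- forward inclusion
    apply nonnegSpan_subset'
    rintro x hx
    simp only [Set.mem_iUnion, exists_prop] at hx
    obtain ⟨s, hs, hx⟩ := hx
    rw [Set.mem_Icc] at hs
    have hs6 : s ≤ 6 := hs.2
    clear hs
    obtain ⟨y, hy, rfl⟩ := hx
    have main : ∀ (s : ℕ) (G : Set (ℝ × ℝ × ℝ)), C12 s = nonnegSpan G →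
        (∀ g ∈ G, T12 (j+6) s g ∈
          nonnegSpan {((5 : ℝ), (2 * ((j+6 : ℕ) : ℝ) - 2), (0 : ℝ)), (0, 1, 0), (0, 0, 1)}) →
        ∀ y ∈ C12 s, T12 (j+6) s y ∈
          nonnegSpan {((5 : ℝ), (2 * ((j+6 : ℕ) : ℝ) - 2), (0 : ℝ)), (0, 1, 0), (0, 0, 1)} := by
      intro s G hG hgen y hy
      rw [hG] at hy
      have h2 := map_mem_nonnegSpan (Tlin (j+6) s) hy
      refine nonnegSpan_subset' ?_ h2
      rintro _ ⟨g, hg, rfl⟩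
      exact hgen g hg
    interval_cases s
    · -- s = 0
      refine main 0 _ rfl ?_ y hy
      rintro g hg
      simp only [Set.mem_singleton_iff] at hg
      subst hg
      simp only [T12]
      exact mem_target _ (by norm_num) (by positivity) (by norm_num)
    · -- s = 1
      refine main 1 _ rfl ?_ y hy
      rintro g hg
      simp only [Set.mem_insert_iff, Set.mem_singleton_iff] at hg
      rcases hg with rfl | rfl <;> simp only [T12] <;>
        exact mem_target _ (by norm_num) (by positivity) (by first | (norm_num; positivity) | norm_num)
    · -- s = 2
      refine main 2 _ rfl ?_ y hy
      rintro g hg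
      simp only [Set.mem_insert_iff, Set.mem_singleton_iff] at hg
      rcases hg with rfl | rfl | rfl
      · simp only [T12, show j+6-2 = j+4 by omega, show j+6-1 = j+5 by omega,
          Nat.choose_self, hB1, Nat.choose_one_right]
        refine mem_target _ (by positivity) (by norm_num) ?_
        push_cast
        nlinarith [hj]
      · simp only [T12]
        exact mem_target _ (by norm_num) (by positivity) (by first | (norm_num; positivity) | norm_num)
      · simp only [T12]
        exact mem_target _ (by norm_num) (by positivity) (by norm_num)
    · -- s = 3
      refine main 3 _ rfl ?_ y hy
      rintro g hg
      simp only [Set.mem_insert_iff, Set.mem_singleton_iff] at hg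
      rcases hg with rfl | rfl | rfl
      · simp only [T12, show j+6-2 = j+4 by omega, show j+6-1 = j+5 by omega,
          show j+6-3 = j+3 by omega, hA1, hB2]
        refine mem_target _ (by positivity) (by norm_num) ?_
        push_cast [Nat.choose_one_right]
        nlinarith [kk1, hj, mul_nonneg hj hj]
      · simp only [T12]
        exact mem_target _ (by norm_num) (by positivity) (by first | (norm_num; positivity) | norm_num)
      · simp only [T12]
        exact mem_target _ (by norm_num) (by positivity) (by norm_num)
    · -- s = 4
      refine main 4 _ rfl ?_ y hy
      rintro g hg
      simp only [Set.mem_insert_iff, Set.mem_singleton_iff] at hg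
      rcases hg with rfl | rfl | rfl | rfl
      · simp only [T12, show j+6-2 = j+4 by omega, show j+6-1 = j+5 by omega,
          show j+6-4 = j+2 by omega, hA2, hB3]
        refine mem_target _ (by positivity) (by norm_num) ?_
        push_cast
        nlinarith [kk2, (show (0:ℝ) ≤ (((j+5).choose 3 : ℕ) : ℝ) from Nat.cast_nonneg _)]
      · simp only [T12, show j+6-2 = j+4 by omega, show j+6-1 = j+5 by omega,
          show j+6-4 = j+2 by omega, hA2, hB3]
        refine mem_target _ (by positivity) (by norm_num) ?_
        push_cast
        nlinarith [kk2, (show (0:ℝ) ≤ (((j+5).choose 3 : ℕ) : ℝ) from Nat.cast_nonneg _)]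
      · simp only [T12]
        exact mem_target _ (by norm_num) (by positivity) (by first | (norm_num; positivity) | norm_num)
      · simp only [T12]
        exact mem_target _ (by norm_num) (by positivity) (by norm_num)
    · -- s = 5
      refine main 5 _ rfl ?_ y hy
      rintro g hg
      simp only [Set.mem_insert_iff, Set.mem_singleton_iff] at hg
      rcases hg with rfl | rfl
      · simp only [T12, show j+6-2 = j+4 by omega, show j+6-1 = j+5 by omega,
          show j+6-5 = j+1 by omega, hA3, hB4]
        refine mem_target _ (by positivity) (by norm_num) ?_
        push_cast
        nlinarith [kk3, (show (0:ℝ) ≤ (((j+5).choose 4 : ℕ) : ℝ) from Nat.cast_nonneg _)]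
      · simp only [T12]
        exact mem_target _ (by norm_num) (by positivity) (by first | (norm_num; positivity) | norm_num)
    · -- s = 6
      refine main 6 _ rfl ?_ y hy
      rintro g hg
      simp only [Set.mem_singleton_iff] at hg
      subst hg
      simp only [T12, show j+6-2 = j+4 by omega, show j+6-1 = j+5 by omega,
        show j+6-6 = j by omega, hA4, hB5]
      refine mem_target _ (by positivity) (by norm_num) ?_
      push_cast
      nlinarith [kk4, (show (0:ℝ) ≤ (((j+5).choose 5 : ℕ) : ℝ) from Nat.cast_nonneg _)]
  · -- reverse inclusion
    apply nonnegSpan_subset'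
    have memU : ∀ (s : ℕ), max 0 (j + 6 - M) ≤ s → s ≤ 6 → ∀ p ∈ C12 s,
        T12 (j+6) s p ∈ nonnegSpan (⋃ s ∈ Set.Icc (max 0 (j + 6 - M)) 6, T12 (j+6) s '' C12 s) := by
      intro s h1 h2 p hp
      apply mem_nonnegSpan_of_mem
      simp only [Set.mem_iUnion, exists_prop]
      exact ⟨s, Set.mem_Icc.mpr ⟨h1, h2⟩, p, hp, rfl⟩
    have hr3 : max 0 (j + 6 - M) ≤ 3 := max_le_iff.mpr ⟨by omega, by omega⟩
    have hr6 : max 0 (j + 6 - M) ≤ 6 := max_le_iff.mpr ⟨by omega, by omega⟩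
    rintro g hg
    simp only [Set.mem_insert_iff, Set.mem_singleton_iff] at hg
    rcases hg with rfl | rfl | rfl
    · -- (5, 2i-2, 0)
      have hmem := memU 6 hr6 (by omega) (1, 2, 0)
        (mem_nonnegSpan_of_mem (by simp [C12]))
      have hApos : (0:ℝ) < ((j+4).choose 4 : ℝ) := by
        exact_mod_cast Nat.choose_pos (show 4 ≤ j + 4 by omega)
      have e : ((5 : ℝ), (2 * ((j + 6 : ℕ) : ℝ) - 2), (0 : ℝ))
          = (5 / ((j+4).choose 4 : ℝ)) • T12 (j+6) 6 (1, 2, 0) := by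
        simp only [T12, show j+6-2 = j+4 by omega, show j+6-1 = j+5 by omega,
          show j+6-6 = j by omega, hA4, hB5, Prod.smul_mk, smul_eq_mul, Prod.mk.injEq]
        refine ⟨by field_simp, ?_, by ring⟩
        push_cast
        field_simp
        nlinarith [kk4]
      rw [e]
      exact nonnegSpan_smul_mem hmem (by positivity)
    · -- (0, 1, 0)
      have hmem := memU 3 hr3 (by omega) (0, 1, 0)
        (mem_nonnegSpan_of_mem (by simp [C12]))
      have hBpos : (0:ℝ) < ((j+5).choose (j+3) : ℝ) := by
        exact_mod_cast Nat.choose_pos (show j + 3 ≤ j + 5 by omega)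
      have e : ((0 : ℝ), (1 : ℝ), (0 : ℝ))
          = (((j+5).choose (j+3) : ℝ))⁻¹ • T12 (j+6) 3 (0, 1, 0) := by
        simp only [T12, show j+6-1 = j+5 by omega, show j+6-3 = j+3 by omega,
          Prod.smul_mk, smul_eq_mul, Prod.mk.injEq]
        refine ⟨by ring, ?_, by ring⟩
        field_simp
      rw [e]
      exact nonnegSpan_smul_mem hmem (by positivity)
    · -- (0, 0, 1)
      have hmem := memU 3 hr3 (by omega) (0, 0, 1)
        (mem_nonnegSpan_of_mem (by simp [C12]))
      have hCpos : (0:ℝ) < ((j+6).choose (j+3) : ℝ) := by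
        exact_mod_cast Nat.choose_pos (show j + 3 ≤ j + 6 by omega)
      have e : ((0 : ℝ), (0 : ℝ), (1 : ℝ))
          = (((j+6).choose (j+3) : ℝ))⁻¹ • T12 (j+6) 3 (0, 0, 1) := by
        simp only [T12, show j+6-3 = j+3 by omega,
          Prod.smul_mk, smul_eq_mul, Prod.mk.injEq]
        refine ⟨by ring, by ring, ?_⟩
        field_simp
      rw [e]
      exact nonnegSpan_smul_mem hmem (by positivity)
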